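/- Fix N ≥ 2 and j ≥ 2; set γ_j = j(N-2+j). Let ũ be the even solution of d/dθ( cos^{N-1}θ ũ'(θ) ) = -cos^{N-1}θ with ũ'(0)=0, and let f_j solve the Riccati IVP f' = -f² + (N-1) tan λ · f + γ_j/cos²λ, f(0)=0. Define σ_j(λ) := ũ'(λ)·((N-1) tan λ - f_j(λ)) - 1. Then σ_j(λ) → ∞ as λ → (π/2)⁻. -/

import Mathlib

open Real Set Filter Topology

set_option maxHeartbeats 1600000

/-- For `N ≥ 2`, `j ≥ 2`, `γⱼ = j(N-2+j)`, with `ũ` the torsion solution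
and `fⱼ` the Riccati solution, the eigenvalue `σⱼ(λ) = ũ'(λ)((N-1)tan λ - fⱼ(λ)) - 1`
tends to `+∞` as `λ → (π/2)⁻`. -/
theorem sigma_tendsto_atTop (N j : ℕ) (hN : 2 ≤ N) (hj : 2 ≤ j) (u u' f : ℝ → ℝ)
    (hu0 : u' 0 = 0)
    (hu : ∀ θ ∈ Ioo (-(π/2)) (π/2), HasDerivAt u (u' θ) θ)
    (hode : ∀ θ ∈ Ioo (-(π/2)) (π/2),
      HasDerivAt (fun s => Real.cos s ^ (N - 1) * u' s) (-(Real.cos θ ^ (N - 1))) θ)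
    (hf0 : f 0 = 0) (hfc : ContinuousOn f (Ico 0 (π/2)))
    (hf : ∀ lam ∈ Ioo (0:ℝ) (π/2),
      HasDerivAt f (-(f lam)^2 + ((N:ℝ) - 1) * Real.tan lam * f lam
        + ((j:ℝ) * ((N:ℝ) - 2 + (j:ℝ))) / (Real.cos lam)^2) lam) :
    Tendsto (fun lam => u' lam * (((N:ℝ) - 1) * Real.tan lam - f lam) - 1)
      (𝓝[<] (π/2)) atTop := by
  have hpi : (0:ℝ) < π / 2 := by positivity
  have hN2 : (2:ℝ) ≤ (N:ℝ) := by exact_mod_cast hN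
  have hj2 : (2:ℝ) ≤ (j:ℝ) := by exact_mod_cast hj
  obtain ⟨c, hc_def⟩ : ∃ c : ℝ, c = (N:ℝ) - 2 + (j:ℝ) := ⟨_, rfl⟩
  have hc2 : (2:ℝ) ≤ c := by rw [hc_def]; linarith
  -- Step A : u' lam ≤ -lam on (0, π/2)
  have hA : ∀ lam ∈ Ioo (0:ℝ) (π/2), u' lam ≤ -lam := by
    intro lam hlam
    obtain ⟨hl0, hl2⟩ := hlam
    have hsub : Icc (0:ℝ) lam ⊆ Ioo (-(π/2)) (π/2) := by
      intro x hx
      exact ⟨by linarith [hx.1], lt_of_le_of_lt hx.2 hl2⟩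
    set G : ℝ → ℝ := fun s => Real.cos s ^ (N-1) * u' s + s * Real.cos lam ^ (N-1) with hG
    have hGd : ∀ x ∈ Icc (0:ℝ) lam,
        HasDerivAt G (-(Real.cos x ^ (N-1)) + Real.cos lam ^ (N-1)) x := by
      intro x hx
      have h1 := (hode x (hsub hx)).add ((hasDerivAt_id x).mul_const (Real.cos lam ^ (N-1)))
      simp only [one_mul] at h1
      exact h1
    have hanti : AntitoneOn G (Icc (0:ℝ) lam) := by
      apply antitoneOn_of_deriv_nonpos (convex_Icc _ _)
      · exact fun x hx => (hGd x hx).continuousAt.continuousWithinAt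
      · intro x hx
        rw [interior_Icc] at hx
        exact (hGd x (Ioo_subset_Icc_self hx)).differentiableAt.differentiableWithinAt
      · intro x hx
        rw [interior_Icc] at hx
        rw [(hGd x (Ioo_subset_Icc_self hx)).deriv]
        have hclam : (0:ℝ) ≤ Real.cos lam :=
          (Real.cos_pos_of_mem_Ioo ⟨by linarith, hl2⟩).le
        have hle : Real.cos lam ≤ Real.cos x :=
          Real.cos_le_cos_of_nonneg_of_le_pi hx.1.le (by linarith [Real.pi_pos]) hx.2.le
        have := pow_le_pow_left₀ hclam hle (N-1)
        linarith
    have h0 : G lam ≤ G 0 := hanti ⟨le_refl 0, hl0.le⟩ ⟨hl0.le, le_refl lam⟩ hl0.le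
    have hG0 : G 0 = 0 := by simp [hG, hu0]
    have hpos : (0:ℝ) < Real.cos lam ^ (N-1) :=
      pow_pos (Real.cos_pos_of_mem_Ioo ⟨by linarith, hl2⟩) _
    have h1 : Real.cos lam ^ (N-1) * u' lam + lam * Real.cos lam ^ (N-1) ≤ 0 := by
      rw [hG0] at h0; exact h0
    by_contra hcon
    push_neg at hcon
    nlinarith [mul_pos hpos (show (0:ℝ) < u' lam + lam by linarith)]
  -- bound for f near zero
  have hsub4 : Icc (0:ℝ) (π/4) ⊆ Ico 0 (π/2) := by
    intro x hx
    exact ⟨hx.1, lt_of_le_of_lt hx.2 (by linarith [Real.pi_pos])⟩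
  obtain ⟨K₀, hK₀⟩ := (isCompact_Icc :
    IsCompact (Icc (0:ℝ) (π/4))).exists_bound_of_continuousOn (hfc.mono hsub4)
  have hK₀0 : 0 ≤ K₀ :=
    le_trans (norm_nonneg _) (hK₀ 0 ⟨le_refl 0, by positivity⟩)
  obtain ⟨C0, hC0_def⟩ : ∃ C0 : ℝ, C0 = K₀^2 + ((N:ℝ)-1)*K₀ := ⟨_, rfl⟩
  have hC00 : 0 ≤ C0 := by
    have : (0:ℝ) ≤ ((N:ℝ)-1)*K₀ := mul_nonneg (by linarith) hK₀0
    nlinarith [sq_nonneg K₀]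
  have hflow : ∀ z ∈ Icc (0:ℝ) (π/4), -C0 * z ≤ f z := by
    have hmono : MonotoneOn (fun x => f x + C0 * x) (Icc (0:ℝ) (π/4)) := by
      apply monotoneOn_of_hasDerivWithinAt_nonneg (convex_Icc _ _)
        (f' := fun x => (-(f x)^2 + ((N:ℝ)-1)*Real.tan x * f x
          + ((j:ℝ) * ((N:ℝ) - 2 + (j:ℝ)))/(Real.cos x)^2) + C0)
      · exact (hfc.mono hsub4).add (continuousOn_const.mul continuousOn_id)
      · intro x hx
        rw [interior_Icc] at hx
        have hx2 : x ∈ Ioo (0:ℝ) (π/2) :=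
          ⟨hx.1, lt_trans hx.2 (by linarith [Real.pi_pos])⟩
        have hd : HasDerivAt (fun x => f x + C0 * x)
            ((-(f x)^2 + ((N:ℝ)-1)*Real.tan x * f x
              + ((j:ℝ) * ((N:ℝ) - 2 + (j:ℝ)))/(Real.cos x)^2) + C0) x := by
          have h3 := (hf x hx2).add ((hasDerivAt_id x).const_mul C0)
          simp only [mul_one] at h3
          exact h3
        rw [interior_Icc]
        exact hd.hasDerivWithinAt
      · intro x hx
        rw [interior_Icc] at hx
        have ht0 : 0 ≤ Real.tan x :=
          Real.tan_nonneg_of_nonneg_of_le_pi_div_two hx.1.le (by linarith [Real.pi_pos, hx.2])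
        have ht1 : Real.tan x ≤ 1 := by
          rw [← Real.tan_pi_div_four]
          exact (Real.tan_lt_tan_of_nonneg_of_lt_pi_div_two hx.1.le
            (by linarith [Real.pi_pos]) hx.2).le
        have hfb := hK₀ x (Ioo_subset_Icc_self hx)
        rw [Real.norm_eq_abs, abs_le] at hfb
        have hγ : (0:ℝ) ≤ ((j:ℝ) * ((N:ℝ) - 2 + (j:ℝ)))/(Real.cos x)^2 := by
          apply div_nonneg _ (sq_nonneg _)
          apply mul_nonneg (by linarith) (by linarith)
        have key1 : (f x)^2 ≤ K₀^2 := by nlinarith [hfb.1, hfb.2]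
        have key2 : -(((N:ℝ)-1)*K₀) ≤ ((N:ℝ)-1)*Real.tan x * f x := by
          nlinarith [mul_nonneg (mul_nonneg (show (0:ℝ) ≤ (N:ℝ)-1 by linarith) ht0)
              (show 0 ≤ K₀ + f x by linarith),
            mul_nonneg (show (0:ℝ) ≤ 1 - Real.tan x by linarith)
              (mul_nonneg (show (0:ℝ) ≤ (N:ℝ)-1 by linarith) hK₀0)]
        rw [hC0_def]
        linarith
    intro z hz
    have h0 := hmono (show (0:ℝ) ∈ Icc (0:ℝ) (π/4) from ⟨le_refl 0, by positivity⟩) hz hz.1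
    simp only [hf0, mul_zero, add_zero, zero_add] at h0
    linarith
  -- Step B : Riccati comparison  c * tan ≤ f  on (0, π/2)
  have hB : ∀ lam ∈ Ioo (0:ℝ) (π/2), c * Real.tan lam ≤ f lam := by
    intro l0 hl
    obtain ⟨hl0, hl2⟩ := hl
    obtain ⟨w, hwdef⟩ : ∃ w : ℝ → ℝ, w = fun x => c * Real.tan x - f x := ⟨_, rfl⟩
    have hw0 : w 0 = 0 := by simp [hwdef, hf0]
    have hcosI : ∀ x ∈ Icc (0:ℝ) l0, 0 < Real.cos x := fun x hx =>
      Real.cos_pos_of_mem_Ioo ⟨by linarith [hx.1], lt_of_le_of_lt hx.2 hl2⟩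
    have key : ∀ η ∈ Ioo (0:ℝ) 1, w l0 ≤ η := by
      intro η hη
      obtain ⟨w', hw'def⟩ : ∃ w' : ℝ → ℝ, w' = fun x => if x = 0 then C0 + 2*c else
        c * (1/(Real.cos x)^2) - (-(f x)^2 + ((N:ℝ)-1)*Real.tan x * f x
          + ((j:ℝ) * ((N:ℝ) - 2 + (j:ℝ)))/(Real.cos x)^2) := ⟨_, rfl⟩
      have hwc : ContinuousOn w (Icc 0 l0) := by
        rw [hwdef]
        apply ContinuousOn.sub
        · exact continuousOn_const.mul (fun x hx =>
            (Real.hasDerivAt_tan (hcosI x hx).ne').continuousAt.continuousWithinAt)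
        · exact hfc.mono (fun x hx => ⟨hx.1, lt_of_le_of_lt hx.2 hl2⟩)
      have hslope : ∀ x ∈ Ico (0:ℝ) l0, ∀ r, w' x < r →
          ∃ᶠ z in 𝓝[>] x, slope w x z < r := by
        intro x hx r hr
        rcases eq_or_lt_of_le hx.1 with h0 | h0
        · -- x = 0
          subst h0
          have hr' : C0 + 2*c < r := by simpa [hw'def] using hr
          have hev1 : ∀ᶠ z in 𝓝[>] (0:ℝ), z ∈ Ioo (0:ℝ) (π/4) :=
            Ioo_mem_nhdsGT_of_mem ⟨le_refl _, by positivity⟩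
          have htanslope : Tendsto (fun z => Real.tan z / z) (𝓝[>] (0:ℝ)) (𝓝 1) := by
            have h := Real.hasDerivAt_tan (x := 0) (by simp)
            rw [hasDerivAt_iff_tendsto_slope] at h
            simp only [Real.cos_zero, one_pow, div_one] at h
            have h2 := h.mono_left
              (nhdsWithin_mono (0:ℝ) (fun z hz => ne_of_gt hz))
            refine h2.congr (fun z => ?_)
            simp [slope_def_field, Real.tan_zero]
          have hev2 : ∀ᶠ z in 𝓝[>] (0:ℝ), Real.tan z / z < 2 :=
            htanslope (Iio_mem_nhds (show (1:ℝ) < 2 by norm_num))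
          refine ((hev1.and hev2).mono ?_).frequently
          rintro z ⟨hz1, hz2⟩
          have hz0 : 0 < z := hz1.1
          have hfz := hflow z (Ioo_subset_Icc_self hz1)
          have hsl : slope w 0 z = w z / z := by
            rw [slope_def_field, hw0, sub_zero, sub_zero]
          rw [hsl, div_lt_iff₀ hz0]
          have htz : Real.tan z < 2 * z := by
            rw [div_lt_iff₀ hz0] at hz2; linarith
          simp only [hwdef]
          nlinarith [mul_pos hz0 (show (0:ℝ) < r - (C0 + 2*c) by linarith [hr']),
            mul_le_mul_of_nonneg_left htz.le (show (0:ℝ) ≤ c by linarith)]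
        · -- 0 < x
          have hx2 : x ∈ Ioo (0:ℝ) (π/2) := ⟨h0, lt_trans hx.2 hl2⟩
          have hcx : 0 < Real.cos x := hcosI x ⟨hx.1, hx.2.le⟩
          have hd : HasDerivAt w (w' x) x := by
            rw [hwdef, hw'def]
            simp only [if_neg (ne_of_gt h0)]
            exact ((Real.hasDerivAt_tan hcx.ne').const_mul c).sub (hf x hx2)
          exact hd.hasDerivWithinAt.liminf_right_slope_le hr
      have hbound : ∀ x ∈ Ico (0:ℝ) l0, w x = η → w' x < 0 := by
        intro x hx hwx
        have hx0 : x ≠ 0 := by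
          rintro rfl
          rw [hw0] at hwx
          exact absurd hwx.symm (ne_of_gt hη.1)
        rw [hw'def]
        simp only [if_neg hx0]
        have hcx : 0 < Real.cos x := hcosI x ⟨hx.1, hx.2.le⟩
        have ht0 : 0 ≤ Real.tan x :=
          Real.tan_nonneg_of_nonneg_of_le_pi_div_two hx.1 (by linarith [hx.2])
        have hsec : 1/(Real.cos x)^2 = 1 + Real.tan x^2 := by
          rw [← Real.inv_one_add_tan_sq hcx.ne', one_div, inv_inv]
        have hfx : f x = c * Real.tan x - η := by
          rw [hwdef] at hwx
          simp only at hwx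
          linarith
        have hη2 : η^2 ≤ η := by nlinarith [hη.1, hη.2]
        have hjc : (2:ℝ) ≤ ((j:ℝ)-1)*((N:ℝ)-2+(j:ℝ)) := by
          nlinarith [mul_nonneg (show (0:ℝ) ≤ (j:ℝ)-2 by linarith)
            (show (0:ℝ) ≤ (N:ℝ)-2 by linarith),
            mul_nonneg (show (0:ℝ) ≤ (j:ℝ)-2 by linarith)
            (show (0:ℝ) ≤ (j:ℝ)-2 by linarith)]
        have hterm : η*Real.tan x*(3-(N:ℝ)-2*(j:ℝ)) ≤ 0 := by
          nlinarith [mul_nonneg hη.1.le ht0]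
        have hkey : ((N:ℝ)-2+(j:ℝ)) * (1 + Real.tan x^2) -
            (-(((N:ℝ)-2+(j:ℝ))*Real.tan x - η)^2
              + ((N:ℝ)-1)*Real.tan x*(((N:ℝ)-2+(j:ℝ))*Real.tan x - η)
              + (j:ℝ)*((N:ℝ)-2+(j:ℝ))*(1+Real.tan x^2)) =
            η^2 - ((j:ℝ)-1)*((N:ℝ)-2+(j:ℝ)) + η*Real.tan x*(3-(N:ℝ)-2*(j:ℝ)) := by
          ring
        rw [div_eq_mul_one_div ((j:ℝ) * ((N:ℝ) - 2 + (j:ℝ))) ((Real.cos x)^2), hsec, hfx,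
          hc_def]
        linarith [hkey, hη2, hjc, hterm, hη.1, hη.2]
      have happ := image_le_of_liminf_slope_right_lt_deriv_boundary hwc hslope
        (by rw [hw0]; exact hη.1.le) (fun x => hasDerivAt_const x η) hbound
      exact happ ⟨hl0.le, le_refl l0⟩
    by_contra hcon
    push_neg at hcon
    have hwpos : 0 < w l0 := by simp only [hwdef]; linarith
    rcases lt_or_ge (w l0) 1 with h | h
    · have hm := key (w l0 / 2) ⟨by linarith, by linarith⟩
      linarith
    · have hm := key (1/2) ⟨by norm_num, by norm_num⟩
      linarith
  -- Step C : conclusion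
  have h1lt : (1:ℝ) < π/2 := by linarith [Real.pi_gt_three]
  have hev : ∀ᶠ lam in 𝓝[<] (π/2),
      Real.tan lam - 1 ≤ u' lam * (((N:ℝ)-1) * Real.tan lam - f lam) - 1 := by
    filter_upwards [Ioo_mem_nhdsLT_of_mem
      (⟨h1lt, le_refl (π/2)⟩ : (π/2) ∈ Ioc (1:ℝ) (π/2))] with lam hlam
    obtain ⟨hl1, hl2⟩ := hlam
    have hl0 : (0:ℝ) < lam := by linarith
    have hAl := hA lam ⟨hl0, hl2⟩
    have hBl := hB lam ⟨hl0, hl2⟩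
    have ht0 : 0 ≤ Real.tan lam :=
      Real.tan_nonneg_of_nonneg_of_le_pi_div_two hl0.le hl2.le
    have htle : Real.tan lam ≤ f lam - ((N:ℝ)-1) * Real.tan lam := by
      nlinarith [mul_nonneg (show (0:ℝ) ≤ c - (N:ℝ) by rw [hc_def]; linarith) ht0]
    have hprod : lam * Real.tan lam ≤ (-(u' lam)) * (f lam - ((N:ℝ)-1) * Real.tan lam) :=
      mul_le_mul (by linarith) htle ht0 (by linarith)
    nlinarith [hprod, mul_nonneg (show (0:ℝ) ≤ lam - 1 by linarith) ht0]
  refine tendsto_atTop_mono' _ hev ?_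
  have h2 := tendsto_atTop_add_const_right (𝓝[<] (π/2)) (-1 : ℝ) Real.tendsto_tan_pi_div_two
  simpa [sub_eq_add_neg] using h2
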